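/- For all integers n ≥ 2, d ≥ 1 and μ ≥ 0, the following identity of integers holds: Σ_{k=0}^{min(d,μ)} C(d,k) · (−2n)^k · (n+1)^{d−k} · Σ_{ℓ=0}^{μ−k} C(d+ℓ−1, ℓ) · n^ℓ = 2^d + Σ_{k=1}^{d} C(d,k) · 2^{d−k} · (n−1)^k · Σ_{ℓ=0}^{μ} C(k+ℓ−1, k−1) · n^ℓ. -/

import Mathlib

open PowerSeries Finset

private noncomputable def G (n : ℤ) : PowerSeries ℤ := PowerSeries.mk fun ℓ => n ^ ℓ

private noncomputable def E : PowerSeries ℤ := PowerSeries.mk fun _ => (1 : ℤ)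

private lemma coeff_E (m : ℕ) : coeff m E = 1 := by simp [E]

private lemma one_sub_mul_G (n : ℤ) : (1 - C n * X) * G n = 1 := by
  ext m
  rw [sub_mul, one_mul, map_sub]
  cases m with
  | zero => simp [G]
  | succ m =>
    rw [mul_assoc, coeff_C_mul, coeff_succ_X_mul]
    simp [G, pow_succ, mul_comm]

private lemma coeff_G_pow (n : ℤ) (k ℓ : ℕ) :
    (coeff ℓ) (G n ^ (k + 1)) = ((k + ℓ).choose k : ℤ) * n ^ ℓ := by
  induction k generalizing ℓ with
  | zero => simp [G]
  | succ k ih =>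
    rw [pow_succ, coeff_mul, Finset.Nat.sum_antidiagonal_eq_sum_range_succ_mk]
    simp only [ih]
    simp only [G, coeff_mk]
    have : ∀ i ∈ range (ℓ + 1), ((k + i).choose k : ℤ) * n ^ i * n ^ (ℓ - i)
        = ((k + i).choose k : ℤ) * n ^ ℓ := by
      intro i hi
      simp only [Finset.mem_range] at hi
      rw [mul_assoc, ← pow_add]
      congr 2
      omega
    rw [show (range ℓ.succ) = range (ℓ+1) from rfl, Finset.sum_congr rfl this, ← Finset.sum_mul]
    congr 1
    have h := Nat.sum_Icc_choose (k + ℓ) k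
    rw [show Finset.Icc k (k + ℓ) = Finset.map ⟨fun i => k + i, add_right_injective k⟩ (range (ℓ + 1)) by
      ext x
      simp only [Finset.mem_Icc, Finset.mem_map, Finset.mem_range, Function.Embedding.coeFn_mk]
      constructor
      · rintro ⟨h1, h2⟩; exact ⟨x - k, by omega, by omega⟩
      · rintro ⟨a, ha, rfl⟩; omega] at h
    rw [Finset.sum_map] at h
    simp only [Function.Embedding.coeFn_mk] at h
    have h2 : ((∑ i ∈ range (ℓ + 1), (k + i).choose k : ℕ) : ℤ)
        = (((k + ℓ + 1).choose (k + 1) : ℕ) : ℤ) := by exact_mod_cast h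
    push_cast at h2 ⊢
    rw [h2]
    congr 2
    omega

private lemma coeff_G_pow_mul_E (n : ℤ) (k m : ℕ) :
    (coeff m) (G n ^ (k + 1) * E) = ∑ ℓ ∈ range (m + 1), ((k + ℓ).choose k : ℤ) * n ^ ℓ := by
  rw [coeff_mul, Finset.Nat.sum_antidiagonal_eq_sum_range_succ_mk]
  apply Finset.sum_congr rfl
  intro i _
  rw [coeff_G_pow]
  simp [E]

private lemma P_eq_L (n : ℤ) (d : ℕ) :
    (C (n + 1) - C (2 * n) * X) ^ d
      = ∑ k ∈ range (d + 1),
          C ((d.choose k : ℤ) * (-2 * n) ^ k * (n + 1) ^ (d - k)) * X ^ k := by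
  rw [sub_eq_add_neg, add_comm, add_pow]
  apply Finset.sum_congr rfl
  intro k _
  have e1 : (-(C (2 * n) * X)) ^ k = C ((-2 * n) ^ k) * X ^ k := by
    rw [show -(C (2 * n) * X) = C (-2 * n) * X by rw [neg_mul (2 : ℤ) n, map_neg]; ring,
      mul_pow, map_pow]
  rw [e1]
  simp only [map_mul, map_pow, map_natCast, map_neg, map_ofNat, map_add, map_one]
  ring

private lemma P_eq_R (n : ℤ) (d : ℕ) :
    (C (n + 1) - C (2 * n) * X) ^ d
      = ∑ k ∈ range (d + 1),
          C ((d.choose k : ℤ) * 2 ^ (d - k) * (n - 1) ^ k) * (1 - C n * X) ^ (d - k) := by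
  have key : C (n + 1) - C (2 * n) * X = C (n - 1) + C 2 * (1 - C n * X) := by
    rw [mul_sub, mul_one, ← mul_assoc, ← map_mul, ← add_sub_assoc, ← map_add]
    congr 2
    ring
  rw [key, add_pow]
  apply Finset.sum_congr rfl
  intro k _
  rw [map_mul, map_mul, map_pow, map_pow, mul_pow, map_natCast, map_ofNat]
  ring

/-- The identity
`∑_{k=0}^{min(d,μ)} C(d,k) (-2n)ᵏ (n+1)^(d-k) ∑_{ℓ=0}^{μ-k} C(d+ℓ-1, ℓ) nˡ
  = 2^d + ∑_{k=1}^{d} C(d,k) 2^(d-k) (n-1)ᵏ ∑_{ℓ=0}^{μ} C(k+ℓ-1, k-1) nˡ`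
for integers `n ≥ 2`, `d ≥ 1` and `μ ≥ 0`. -/
theorem pow_add_one_growth_count_identity (n : ℤ) (hn : 2 ≤ n) (d μ : ℕ) (hd : 1 ≤ d) :
    ∑ k ∈ Finset.range (min d μ + 1),
        (d.choose k : ℤ) * (-2 * n) ^ k * (n + 1) ^ (d - k) *
          ∑ ℓ ∈ Finset.range (μ - k + 1), ((d + ℓ - 1).choose ℓ : ℤ) * n ^ ℓ =
      2 ^ d + ∑ k ∈ Finset.Icc 1 d,
        (d.choose k : ℤ) * 2 ^ (d - k) * (n - 1) ^ k *
          ∑ ℓ ∈ Finset.range (μ + 1), ((k + ℓ - 1).choose (k - 1) : ℤ) * n ^ ℓ := by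
  set H : PowerSeries ℤ := G n ^ d * E with hH
  -- coefficients of H
  have keyH : ∀ m : ℕ, coeff m H
      = ∑ ℓ ∈ range (m + 1), ((d + ℓ - 1).choose ℓ : ℤ) * n ^ ℓ := by
    intro m
    have hcs : ∀ ℓ : ℕ, (d - 1 + ℓ).choose (d - 1) = (d - 1 + ℓ).choose ℓ := by
      intro ℓ
      have h := Nat.choose_symm (show ℓ ≤ d - 1 + ℓ by omega)
      rw [show d - 1 + ℓ - ℓ = d - 1 by omega] at h
      exact h
    rw [hH, show d = (d - 1) + 1 by omega, coeff_G_pow_mul_E]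
    apply Finset.sum_congr rfl
    intro ℓ _
    rw [show d - 1 + 1 + ℓ - 1 = (d - 1) + ℓ by omega, hcs ℓ]
  -- Left computation
  have L : coeff μ ((C (n + 1) - C (2 * n) * X) ^ d * H)
      = ∑ k ∈ Finset.range (min d μ + 1),
          (d.choose k : ℤ) * (-2 * n) ^ k * (n + 1) ^ (d - k) *
            ∑ ℓ ∈ Finset.range (μ - k + 1), ((d + ℓ - 1).choose ℓ : ℤ) * n ^ ℓ := by
    rw [P_eq_L, Finset.sum_mul, map_sum]
    have hterm : ∀ k : ℕ,
        coeff μ (C ((d.choose k : ℤ) * (-2 * n) ^ k * (n + 1) ^ (d - k)) * X ^ k * H)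
          = if k ≤ μ then
              (d.choose k : ℤ) * (-2 * n) ^ k * (n + 1) ^ (d - k) *
                ∑ ℓ ∈ Finset.range (μ - k + 1), ((d + ℓ - 1).choose ℓ : ℤ) * n ^ ℓ
            else 0 := by
      intro k
      rw [mul_assoc, mul_comm (X ^ k) H, ← mul_assoc, mul_comm _ (X ^ k), ← mul_assoc]
      rw [show X ^ k * C ((d.choose k : ℤ) * (-2 * n) ^ k * (n + 1) ^ (d - k)) * H
          = C ((d.choose k : ℤ) * (-2 * n) ^ k * (n + 1) ^ (d - k)) * (H * X ^ k) by ring]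
      rw [coeff_C_mul, coeff_mul_X_pow', keyH]
      rw [mul_ite, mul_zero]
    rw [Finset.sum_congr rfl (fun k _ => hterm k)]
    rw [show ∑ k ∈ range (d + 1),
          (if k ≤ μ then (d.choose k : ℤ) * (-2 * n) ^ k * (n + 1) ^ (d - k) *
            ∑ ℓ ∈ Finset.range (μ - k + 1), ((d + ℓ - 1).choose ℓ : ℤ) * n ^ ℓ else 0)
        = ∑ k ∈ range (min d μ + 1),
          (if k ≤ μ then (d.choose k : ℤ) * (-2 * n) ^ k * (n + 1) ^ (d - k) *
            ∑ ℓ ∈ Finset.range (μ - k + 1), ((d + ℓ - 1).choose ℓ : ℤ) * n ^ ℓ else 0) by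
      symm
      apply Finset.sum_subset
      · exact Finset.range_subset_range.mpr (by omega)
      · intro x hx hnx
        simp only [Finset.mem_range] at hx hnx
        rw [if_neg (by omega)]]
    apply Finset.sum_congr rfl
    intro k hk
    simp only [Finset.mem_range] at hk
    rw [if_pos (by omega)]
  -- Right computation
  have R : coeff μ ((C (n + 1) - C (2 * n) * X) ^ d * H)
      = 2 ^ d + ∑ k ∈ Finset.Icc 1 d,
          (d.choose k : ℤ) * 2 ^ (d - k) * (n - 1) ^ k *
            ∑ ℓ ∈ Finset.range (μ + 1), ((k + ℓ - 1).choose (k - 1) : ℤ) * n ^ ℓ := by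
    rw [P_eq_R, Finset.sum_mul, map_sum]
    have hterm : ∀ k ∈ range (d + 1),
        coeff μ (C ((d.choose k : ℤ) * 2 ^ (d - k) * (n - 1) ^ k)
            * (1 - C n * X) ^ (d - k) * H)
          = (d.choose k : ℤ) * 2 ^ (d - k) * (n - 1) ^ k * coeff μ (G n ^ k * E) := by
      intro k hk
      simp only [Finset.mem_range] at hk
      have hGd : G n ^ d = G n ^ (d - k) * G n ^ k := by
        rw [← pow_add]; congr 1; omega
      have : C ((d.choose k : ℤ) * 2 ^ (d - k) * (n - 1) ^ k)
            * (1 - C n * X) ^ (d - k) * H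
          = C ((d.choose k : ℤ) * 2 ^ (d - k) * (n - 1) ^ k) * (G n ^ k * E) := by
        rw [hH, hGd]
        rw [show C ((d.choose k : ℤ) * 2 ^ (d - k) * (n - 1) ^ k)
              * (1 - C n * X) ^ (d - k) * (G n ^ (d - k) * G n ^ k * E)
            = C ((d.choose k : ℤ) * 2 ^ (d - k) * (n - 1) ^ k)
              * ((((1 - C n * X) * G n) ^ (d - k)) * (G n ^ k * E)) by
          rw [mul_pow]; ring]
        rw [one_sub_mul_G, one_pow, one_mul]
      rw [this, coeff_C_mul]
    rw [Finset.sum_congr rfl hterm]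
    rw [Finset.range_eq_Ico, Finset.sum_eq_sum_Ico_succ_bot (Nat.succ_pos d)]
    congr 1
    · simp [coeff_E]
    · rw [Nat.succ_eq_add_one, Finset.Ico_add_one_right_eq_Icc]
      apply Finset.sum_congr rfl
      intro k hk
      simp only [Finset.mem_Icc] at hk
      congr 1
      rw [show k = (k - 1) + 1 by omega, coeff_G_pow_mul_E]
      apply Finset.sum_congr rfl
      intro ℓ _
      congr 3 <;> omega
  rw [← L, R]
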